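/- Let α be a real number with 0 ≤ α < 1 and let n ≥ 3 be an integer. Then λ_α(K_1 ∨ (K_{n−2} ∪ K_1)) is the largest real root of the cubic polynomial φ(x) = x³ − (αn + n + α − 3)x² + (αn² + α²n − αn − n − 2α + 1)x − α²n² + 3α²n − αn + n − 4α² + 5α − 3. -/

import Mathlib

open SimpleGraph

/-- The `Aα`-matrix of a finite simple graph: `Aα(G) = α·D(G) + (1-α)·A(G)`. -/
noncomputable def aAlphaMatrix {V : Type*} [Finite V] (α : ℝ) (G : SimpleGraph V) :
    Matrix V V ℝ :=
  letI := Fintype.ofFinite V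
  letI := Classical.decEq V
  letI : DecidableRel G.Adj := Classical.decRel _
  α • Matrix.diagonal (fun v => (G.degree v : ℝ)) + (1 - α) • (G.adjMatrix ℝ)

/-- The `Aα`-spectral radius: the largest eigenvalue of `Aα(G)` (the supremum of its real
spectrum; all eigenvalues of this symmetric matrix are real). -/
noncomputable def lambdaAlpha {V : Type*} [Finite V] (α : ℝ) (G : SimpleGraph V) : ℝ :=
  letI := Fintype.ofFinite V
  letI := Classical.decEq V
  sSup (spectrum ℝ (aAlphaMatrix α G))

/-- The join `G ∨ H` of two graphs on disjoint vertex sets. -/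
def graphJoin {V W : Type*} (G : SimpleGraph V) (H : SimpleGraph W) : SimpleGraph (V ⊕ W) where
  Adj x y :=
    match x, y with
    | Sum.inl a, Sum.inl b => G.Adj a b
    | Sum.inr a, Sum.inr b => H.Adj a b
    | Sum.inl _, Sum.inr _ => True
    | Sum.inr _, Sum.inl _ => True
  symm := by
    refine ⟨?_⟩
    rintro (a | a) (b | b) h
    · exact G.adj_symm h
    · trivial
    · trivial
    · exact H.adj_symm h
  loopless := by
    refine ⟨?_⟩
    rintro (a | a) h
    · exact G.irrefl h
    · exact H.irrefl h

/-- `G` has an `H`-factor where `H` consists of the paths `P_k` for `k ∈ ks`: a spanning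
subgraph all of whose connected components are paths `P_k` with `k ∈ ks`. -/
def HasPathFactor {V : Type*} (G : SimpleGraph V) (ks : Set ℕ) : Prop :=
  ∃ F : SimpleGraph V, F ≤ G ∧
    ∀ c : F.ConnectedComponent, ∃ k ∈ ks, Nonempty ((F.induce c.supp) ≃g pathGraph k)

/-- `K_1 ∨ (K_{n-2} ∪ K_1)`. -/
def specialGraph (n : ℕ) : SimpleGraph (Fin 1 ⊕ (Fin (n - 2) ⊕ Fin 1)) :=
  graphJoin (⊤ : SimpleGraph (Fin 1))
    ((⊤ : SimpleGraph (Fin (n - 2))) ⊕g (⊤ : SimpleGraph (Fin 1)))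

/- ### auxiliary lemmas -/

lemma my_aAlphaMatrix_eq {V : Type*} [Fintype V] [DecidableEq V] (α : ℝ) (G : SimpleGraph V)
    [DecidableRel G.Adj] :
    aAlphaMatrix α G
      = α • Matrix.diagonal (fun v => (G.degree v : ℝ)) + (1 - α) • (G.adjMatrix ℝ) := by
  unfold aAlphaMatrix
  congr!

lemma my_lambdaAlpha_eq {V : Type*} [Fintype V] [DecidableEq V] (α : ℝ) (G : SimpleGraph V) :
    lambdaAlpha α G = sSup (spectrum ℝ (aAlphaMatrix α G)) := by
  unfold lambdaAlpha
  congr!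

lemma my_algebraMap_mulVec {V : Type*} [Fintype V] [DecidableEq V] (μ : ℝ) (v : V → ℝ) :
    ((algebraMap ℝ (Matrix V V ℝ)) μ).mulVec v = μ • v := by
  rw [Matrix.algebraMap_eq_diagonal]
  ext x
  simp [Matrix.mulVec_diagonal]

lemma my_mem_spectrum_iff {V : Type*} [Fintype V] [DecidableEq V] (N : Matrix V V ℝ) (μ : ℝ) :
    μ ∈ spectrum ℝ N ↔ ∃ v : V → ℝ, v ≠ 0 ∧ N.mulVec v = μ • v := by
  rw [spectrum.mem_iff, Matrix.isUnit_iff_isUnit_det, isUnit_iff_ne_zero, not_ne_iff,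
    ← Matrix.exists_mulVec_eq_zero_iff]
  apply exists_congr; intro v
  refine and_congr_right fun hv => ?_
  rw [Matrix.sub_mulVec, sub_eq_zero, my_algebraMap_mulVec, eq_comm]

lemma my_degree_eq_sum {V : Type*} [Fintype V] [DecidableEq V] (G : SimpleGraph V)
    [DecidableRel G.Adj] (x : V) :
    (G.degree x : ℝ) = ∑ y : V, if G.Adj x y then (1 : ℝ) else 0 := by
  rw [SimpleGraph.degree, neighborFinset_eq_filter, Finset.card_filter]
  push_cast
  exact Finset.sum_congr rfl fun y _ => by split <;> norm_num

lemma my_mulVec_eq {V : Type*} [Fintype V] [DecidableEq V] (α : ℝ) (G : SimpleGraph V)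
    [DecidableRel G.Adj] (v : V → ℝ) (x : V) :
    (aAlphaMatrix α G).mulVec v x
      = α * (G.degree x : ℝ) * v x + (1 - α) * ∑ y : V, if G.Adj x y then v y else 0 := by
  rw [my_aAlphaMatrix_eq, Matrix.add_mulVec, Matrix.smul_mulVec, Matrix.smul_mulVec]
  simp only [Pi.add_apply, Pi.smul_apply, smul_eq_mul, Matrix.mulVec_diagonal,
    SimpleGraph.adjMatrix_mulVec_apply, neighborFinset_eq_filter, Finset.sum_filter]
  ring

section Special

variable (α : ℝ) (n : ℕ)

abbrev SVert (n : ℕ) := Fin 1 ⊕ (Fin (n - 2) ⊕ Fin 1)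

noncomputable instance specialAdjDec (n : ℕ) : DecidableRel (specialGraph n).Adj :=
  Classical.decRel _

/-- The three row-sum computations. -/
lemma special_mulVec (hn : 3 ≤ n) (v : SVert n → ℝ) :
    (∀ i, (aAlphaMatrix α (specialGraph n)).mulVec v (Sum.inl i)
        = α * ((n : ℝ) - 1) * v (Sum.inl i)
          + (1 - α) * ((∑ j : Fin (n - 2), v (Sum.inr (Sum.inl j))) + v (Sum.inr (Sum.inr 0)))) ∧
    (∀ i, (aAlphaMatrix α (specialGraph n)).mulVec v (Sum.inr (Sum.inl i))
        = α * ((n : ℝ) - 2) * v (Sum.inr (Sum.inl i))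
          + (1 - α) * (v (Sum.inl 0) + (∑ j : Fin (n - 2), v (Sum.inr (Sum.inl j)))
              - v (Sum.inr (Sum.inl i)))) ∧
    (∀ i, (aAlphaMatrix α (specialGraph n)).mulVec v (Sum.inr (Sum.inr i))
        = α * v (Sum.inr (Sum.inr i)) + (1 - α) * v (Sum.inl 0)) := by
  have hm : ((n - 2 : ℕ) : ℝ) = (n : ℝ) - 2 := by
    have : (2 : ℕ) ≤ n := by omega
    push_cast [this]
    ring
  have hdeg : ∀ x : SVert n, ((specialGraph n).degree x : ℝ)
      = ∑ y : SVert n, if (specialGraph n).Adj x y then (1 : ℝ) else 0 :=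
    my_degree_eq_sum _
  -- degree values
  have hsum_split : ∀ f : SVert n → ℝ, (∑ y : SVert n, f y)
      = (∑ j : Fin 1, f (Sum.inl j)) + ((∑ j : Fin (n - 2), f (Sum.inr (Sum.inl j)))
        + (∑ j : Fin 1, f (Sum.inr (Sum.inr j)))) := by
    intro f
    rw [Fintype.sum_sum_type, Fintype.sum_sum_type]
  have hadj_uu : ∀ i j : Fin 1, ¬ (specialGraph n).Adj (Sum.inl i) (Sum.inl j) := by
    intro i j; simp [specialGraph, graphJoin, Subsingleton.elim i j]
  have hadj_uc : ∀ (i : Fin 1) (j : Fin (n - 2)),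
      (specialGraph n).Adj (Sum.inl i) (Sum.inr (Sum.inl j)) := by
    intro i j; simp [specialGraph, graphJoin]
  have hadj_uw : ∀ i j : Fin 1, (specialGraph n).Adj (Sum.inl i) (Sum.inr (Sum.inr j)) := by
    intro i j; simp [specialGraph, graphJoin]
  have hadj_cu : ∀ (i : Fin (n - 2)) (j : Fin 1),
      (specialGraph n).Adj (Sum.inr (Sum.inl i)) (Sum.inl j) := by
    intro i j; simp [specialGraph, graphJoin]
  have hadj_cc : ∀ i j : Fin (n - 2),
      (specialGraph n).Adj (Sum.inr (Sum.inl i)) (Sum.inr (Sum.inl j)) ↔ i ≠ j := by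
    intro i j; simp [specialGraph, graphJoin]
  have hadj_cw : ∀ (i : Fin (n - 2)) (j : Fin 1),
      ¬ (specialGraph n).Adj (Sum.inr (Sum.inl i)) (Sum.inr (Sum.inr j)) := by
    intro i j; simp [specialGraph, graphJoin]
  have hadj_wu : ∀ (i : Fin 1) (j : Fin 1),
      (specialGraph n).Adj (Sum.inr (Sum.inr i)) (Sum.inl j) := by
    intro i j; simp [specialGraph, graphJoin]
  have hadj_wc : ∀ (i : Fin 1) (j : Fin (n - 2)),
      ¬ (specialGraph n).Adj (Sum.inr (Sum.inr i)) (Sum.inr (Sum.inl j)) := by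
    intro i j; simp [specialGraph, graphJoin]
  have hadj_ww : ∀ i j : Fin 1, ¬ (specialGraph n).Adj (Sum.inr (Sum.inr i)) (Sum.inr (Sum.inr j)) := by
    intro i j; simp [specialGraph, graphJoin, Subsingleton.elim i j]
  -- ite-sum over clique with hole at i
  have hclique_sum : ∀ (i : Fin (n - 2)) (f : Fin (n - 2) → ℝ),
      (∑ j : Fin (n - 2), if i ≠ j then f j else 0) = (∑ j : Fin (n - 2), f j) - f i := by
    intro i f
    have : ∀ j : Fin (n - 2), (if i ≠ j then f j else 0) = f j - (if i = j then f j else 0) := by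
      intro j; by_cases h : i = j <;> simp [h]
    rw [Finset.sum_congr rfl fun j _ => this j, Finset.sum_sub_distrib, Finset.sum_ite_eq]
    simp
  refine ⟨?_, ?_, ?_⟩
  · intro i
    rw [my_mulVec_eq, hdeg, hsum_split, hsum_split (fun y => if (specialGraph n).Adj (Sum.inl i) y then v y else 0)]
    simp only [hadj_uu, hadj_uc, hadj_uw, if_true, if_false, if_neg]
    · simp only [Finset.sum_const, Finset.card_univ, Fintype.card_fin, Fin.sum_univ_one,
        Finset.sum_const_zero, nsmul_eq_mul, hm]
      ring
  · intro i
    rw [my_mulVec_eq, hdeg, hsum_split, hsum_split (fun y => if (specialGraph n).Adj (Sum.inr (Sum.inl i)) y then v y else 0)]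
    simp only [hadj_cu, hadj_cc, hadj_cw, if_true, if_false]
    rw [hclique_sum i (fun j => v (Sum.inr (Sum.inl j))), hclique_sum i (fun _ => (1:ℝ))]
    simp only [Finset.sum_const, Finset.card_univ, Fintype.card_fin, Fin.sum_univ_one,
      Finset.sum_const_zero, nsmul_eq_mul, hm, mul_one]
    ring
  · intro i
    rw [my_mulVec_eq, hdeg, hsum_split, hsum_split (fun y => if (specialGraph n).Adj (Sum.inr (Sum.inr i)) y then v y else 0)]
    simp only [hadj_wu, hadj_wc, hadj_ww, if_true, if_false]
    simp only [Finset.sum_const, Finset.card_univ, Fintype.card_fin, Fin.sum_univ_one,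
      Finset.sum_const_zero, nsmul_eq_mul, hm]
    have h1 : v (Sum.inr (Sum.inr i)) = v (Sum.inr (Sum.inr 0)) := by
      congr 1
      exact congrArg _ (congrArg _ (Subsingleton.elim i 0))
    rw [h1]
    ring

end Special

section Main

variable {α : ℝ} {n : ℕ}

/-- abbreviation for the cubic. -/
noncomputable def phiPoly (α : ℝ) (n : ℕ) (x : ℝ) : ℝ :=
  x ^ 3 - (α * n + n + α - 3) * x ^ 2
    + (α * n ^ 2 + α ^ 2 * n - α * n - n - 2 * α + 1) * x
    - α ^ 2 * n ^ 2 + 3 * α ^ 2 * n - α * n + n - 4 * α ^ 2 + 5 * α - 3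

lemma special_isHermitian {V : Type*} [Fintype V] [DecidableEq V] (α : ℝ)
    (G : SimpleGraph V) [DecidableRel G.Adj] : (aAlphaMatrix α G).IsHermitian := by
  rw [Matrix.IsHermitian, Matrix.conjTranspose_eq_transpose_of_trivial, my_aAlphaMatrix_eq,
    Matrix.transpose_add, Matrix.transpose_smul, Matrix.transpose_smul,
    Matrix.diagonal_transpose, SimpleGraph.transpose_adjMatrix]

lemma root_mem_spectrum (hα1 : α < 1) (hn : 3 ≤ n) {μ : ℝ} (hφ : phiPoly α n μ = 0) :
    μ ∈ spectrum ℝ (aAlphaMatrix α (specialGraph n)) := by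
  have hm1 : 0 < n - 2 := by omega
  have hN : (3:ℝ) ≤ (n:ℝ) := by exact_mod_cast hn
  rw [my_mem_spectrum_iff]
  by_cases hdeg : μ = α ∧ (n:ℝ) = 3
  · -- degenerate case: eigenvector (0, 1, -1)
    obtain ⟨hμα, hN3⟩ := hdeg
    set v : SVert n → ℝ := Sum.elim (fun _ => 0) (Sum.elim (fun _ => 1) (fun _ => -1)) with hv
    refine ⟨v, ?_, ?_⟩
    · intro h
      have := congrFun h (Sum.inr (Sum.inl ⟨0, hm1⟩))
      simp [hv] at this
    · obtain ⟨h1, h2, h3⟩ := special_mulVec α n hn v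
      have hsum : ∑ j : Fin (n - 2), v (Sum.inr (Sum.inl j)) = ((n:ℝ) - 2) := by
        simp only [hv, Sum.elim_inr, Sum.elim_inl, Finset.sum_const, Finset.card_univ,
          Fintype.card_fin, nsmul_eq_mul, mul_one]
        have h2n : (2:ℕ) ≤ n := by omega
        push_cast [h2n]
        ring
      funext x
      rcases x with i | (i | i)
      · rw [Pi.smul_apply, h1 i, hsum]
        simp only [hv, Sum.elim_inl, Sum.elim_inr, smul_eq_mul]
        rw [hN3]; ring
      · rw [Pi.smul_apply, h2 i, hsum]
        simp only [hv, Sum.elim_inl, Sum.elim_inr, smul_eq_mul]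
        rw [hμα, hN3]; ring
      · rw [Pi.smul_apply, h3 i]
        simp only [hv, Sum.elim_inl, Sum.elim_inr, smul_eq_mul]
        rw [hμα]; ring
  · -- generic case
    set d2 : ℝ := α * ((n:ℝ) - 2) + (1 - α) * ((n:ℝ) - 3) with hd2
    set a : ℝ := (μ - α) * (μ - d2) with ha
    set c : ℝ := (1 - α) * (μ - α) with hc
    set b : ℝ := (1 - α) * (μ - d2) with hb
    set v : SVert n → ℝ := Sum.elim (fun _ => a) (Sum.elim (fun _ => c) (fun _ => b)) with hv
    refine ⟨v, ?_, ?_⟩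
    · intro h
      have hcz : c = 0 := by simpa [hv] using congrFun h (Sum.inr (Sum.inl ⟨0, hm1⟩))
      have hbz : b = 0 := by simpa [hv] using congrFun h (Sum.inr (Sum.inr 0))
      have h1α : (1:ℝ) - α ≠ 0 := by linarith
      have hμα : μ = α := by
        rcases mul_eq_zero.1 (hc ▸ hcz) with h | h
        · exact absurd h h1α
        · linarith
      have hμd2 : μ = d2 := by
        rcases mul_eq_zero.1 (hb ▸ hbz) with h | h
        · exact absurd h h1α
        · linarith
      apply hdeg
      refine ⟨hμα, ?_⟩
      have : α = d2 := hμα ▸ hμd2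
      rw [hd2] at this
      nlinarith [this]
    · obtain ⟨h1, h2, h3⟩ := special_mulVec α n hn v
      have hsum : ∑ j : Fin (n - 2), v (Sum.inr (Sum.inl j)) = ((n:ℝ) - 2) * c := by
        simp only [hv, Sum.elim_inr, Sum.elim_inl, Finset.sum_const, Finset.card_univ,
          Fintype.card_fin, nsmul_eq_mul]
        have h2n : (2:ℕ) ≤ n := by omega
        push_cast [h2n]
        ring
      funext x
      rcases x with i | (i | i)
      · rw [Pi.smul_apply, h1 i, hsum]
        simp only [hv, Sum.elim_inl, Sum.elim_inr, smul_eq_mul, ha, hb, hc, hd2]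
        unfold phiPoly at hφ
        linear_combination -hφ
      · rw [Pi.smul_apply, h2 i, hsum]
        simp only [hv, Sum.elim_inl, Sum.elim_inr, smul_eq_mul, ha, hb, hc, hd2]
        ring
      · rw [Pi.smul_apply, h3 i]
        simp only [hv, Sum.elim_inl, Sum.elim_inr, smul_eq_mul, ha, hb, hc, hd2]
        ring

lemma mem_spectrum_imp (hα1 : α < 1) (hn : 3 ≤ n) {μ : ℝ}
    (hμ : μ ∈ spectrum ℝ (aAlphaMatrix α (specialGraph n))) :
    phiPoly α n μ = 0 ∨ μ = α * ((n:ℝ) - 1) - 1 := by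
  have hm1 : 0 < n - 2 := by omega
  have h1α : (1:ℝ) - α ≠ 0 := by linarith
  rw [my_mem_spectrum_iff] at hμ
  obtain ⟨v, hv, hMv⟩ := hμ
  obtain ⟨h1, h2, h3⟩ := special_mulVec α n hn v
  by_cases hconst : ∀ i j : Fin (n - 2), v (Sum.inr (Sum.inl i)) = v (Sum.inr (Sum.inl j))
  · left
    set i0 : Fin (n - 2) := ⟨0, hm1⟩ with hi0
    set a : ℝ := v (Sum.inl 0) with ha
    set c : ℝ := v (Sum.inr (Sum.inl i0)) with hc
    set b : ℝ := v (Sum.inr (Sum.inr 0)) with hb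
    have hsum : ∑ j : Fin (n - 2), v (Sum.inr (Sum.inl j)) = ((n:ℝ) - 2) * c := by
      rw [Finset.sum_congr rfl fun j _ => hconst j i0]
      simp only [Finset.sum_const, Finset.card_univ, Fintype.card_fin, nsmul_eq_mul]
      have h2n : (2:ℕ) ≤ n := by omega
      push_cast [h2n]
      ring
    have eq1 : α * ((n:ℝ) - 1) * a + (1 - α) * (((n:ℝ) - 2) * c + b) = μ * a := by
      have := congrFun hMv (Sum.inl 0)
      rw [h1 0, hsum, Pi.smul_apply, smul_eq_mul] at this
      linarith [this]
    have eq2 : α * ((n:ℝ) - 2) * c + (1 - α) * (a + ((n:ℝ) - 2) * c - c) = μ * c := by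
      have := congrFun hMv (Sum.inr (Sum.inl i0))
      rw [h2 i0, hsum, Pi.smul_apply, smul_eq_mul] at this
      linarith [this]
    have eq3 : α * b + (1 - α) * a = μ * b := by
      have := congrFun hMv (Sum.inr (Sum.inr 0))
      rw [h3 0, Pi.smul_apply, smul_eq_mul] at this
      linarith [this]
    set d2 : ℝ := α * ((n:ℝ) - 2) + (1 - α) * ((n:ℝ) - 3) with hd2
    have key : phiPoly α n μ * a = 0 := by
      unfold phiPoly
      linear_combination (-(μ - α) * (μ - d2)) * eq1 + (-(1 - α) * ((n:ℝ) - 2) * (μ - α)) * eq2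
        + (-(1 - α) * (μ - d2)) * eq3
    rcases mul_eq_zero.1 key with h | haz
    · exact h
    · -- a = 0
      have hb3 : (μ - α) * b = 0 := by linear_combination -eq3 + (1 - α) * haz
      have hc2 : (μ - d2) * c = 0 := by
        rw [hd2]; linear_combination -eq2 + (1 - α) * haz
      have hX : (1 - α) * (((n:ℝ) - 2) * c + b) = 0 := by
        linear_combination eq1 + (μ - α * ((n:ℝ) - 1)) * haz
      have hcb : ((n:ℝ) - 2) * c + b = 0 := by
        rcases mul_eq_zero.1 hX with h | h
        · exact absurd h h1α
        · exact h
      by_cases hcz : c = 0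
      · exfalso
        apply hv
        have hbz : b = 0 := by
          have : ((n:ℝ) - 2) * 0 + b = 0 := hcz ▸ hcb
          linarith
        funext x
        rcases x with j | (j | j)
        · have : (Sum.inl j : SVert n) = Sum.inl 0 := by
            exact congrArg _ (Subsingleton.elim j 0)
          rw [this]; exact haz
        · rw [hconst j i0]; exact hcz
        · have : (Sum.inr (Sum.inr j) : SVert n) = Sum.inr (Sum.inr 0) := by
            exact congrArg _ (congrArg _ (Subsingleton.elim j 0))
          rw [this]; exact hbz
      · have hμd2 : μ = d2 := by
          rcases mul_eq_zero.1 hc2 with h | h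
          · linarith [h]
          · exact absurd h hcz
        have hbz : b = -(((n:ℝ) - 2) * c) := by linarith [hcb]
        have hN3' : (3:ℝ) ≤ (n:ℝ) := by exact_mod_cast hn
        have hbne : b ≠ 0 := by
          rw [hbz]
          intro h
          have h2 : ((n:ℝ) - 2) * c = 0 := by linarith [h]
          rcases mul_eq_zero.1 h2 with h' | h'
          · linarith
          · exact hcz h'
        have hμα : μ = α := by
          rcases mul_eq_zero.1 hb3 with h | h
          · linarith [h]
          · exact absurd h hbne
        have hN3 : (n:ℝ) = 3 := by
          have : α = d2 := hμα ▸ hμd2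
          rw [hd2] at this
          nlinarith [this]
        have hn3 : n = 3 := by exact_mod_cast hN3
        subst hn3 hμα
        unfold phiPoly
        push_cast
        ring
  · right
    push_neg at hconst
    obtain ⟨i, j, hij⟩ := hconst
    have eqi := congrFun hMv (Sum.inr (Sum.inl i))
    have eqj := congrFun hMv (Sum.inr (Sum.inl j))
    rw [h2 i, Pi.smul_apply, smul_eq_mul] at eqi
    rw [h2 j, Pi.smul_apply, smul_eq_mul] at eqj
    have hsub : (α * ((n:ℝ) - 2) - (1 - α) - μ) * (v (Sum.inr (Sum.inl i)) - v (Sum.inr (Sum.inl j))) = 0 := by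
      linear_combination eqi - eqj
    rcases mul_eq_zero.1 hsub with h | h
    · linarith [h]
    · exact absurd (by linarith [h]) hij

lemma cubic_exists_root_ge (P Q R s : ℝ) (hneg : s ^ 3 - P * s ^ 2 + Q * s + R < 0) :
    ∃ x : ℝ, x ^ 3 - P * x ^ 2 + Q * x + R = 0 ∧ s ≤ x := by
  set f : ℝ → ℝ := fun x => x ^ 3 - P * x ^ 2 + Q * x + R with hf
  have hcont : Continuous f := by fun_prop
  set T : ℝ := max s (1 + |P| + |Q| + |R|) with hT
  have habs : 0 ≤ |P| + |Q| + |R| := by positivity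
  have hT1 : 1 ≤ T := le_trans (by linarith) (le_max_right _ _)
  have hTs : |P| + |Q| + |R| + 1 ≤ T := le_trans (by linarith) (le_max_right _ _)
  have hTle : s ≤ T := le_max_left _ _
  have hpos : 0 < f T := by
    show 0 < T ^ 3 - P * T ^ 2 + Q * T + R
    have hT0 : (0:ℝ) ≤ T := by linarith
    have hTT : T ≤ T ^ 2 := by nlinarith
    have h6 : (1:ℝ) ≤ T ^ 2 := by nlinarith
    have h1 : -|P| * T ^ 2 ≤ -P * T ^ 2 :=
      mul_le_mul_of_nonneg_right (neg_le_neg (le_abs_self P)) (sq_nonneg T)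
    have h2a : -|Q| * T ^ 2 ≤ -|Q| * T := by
      nlinarith [abs_nonneg Q]
    have h2b : -|Q| * T ≤ Q * T := mul_le_mul_of_nonneg_right (neg_abs_le Q) hT0
    have h3 : -|R| * T ^ 2 ≤ R := by
      have h3a : -|R| * T ^ 2 ≤ -|R| := by nlinarith [abs_nonneg R]
      linarith [neg_abs_le R]
    have h5 : (|P| + |Q| + |R|) * T ^ 2 ≤ (T - 1) * T ^ 2 :=
      mul_le_mul_of_nonneg_right (by linarith) (sq_nonneg T)
    have hcube : T ^ 3 - (T - 1) * T ^ 2 = T ^ 2 := by ring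
    linarith [h1, h2a, h2b, h3, h5, h6, hcube]
  have h0mem : (0:ℝ) ∈ Set.Icc (f s) (f T) := ⟨hneg.le, hpos.le⟩
  obtain ⟨x, hx, hfx⟩ := intermediate_value_Icc hTle hcont.continuousOn h0mem
  exact ⟨x, hfx, hx.1⟩

lemma phi_exists_root_ge (hα0 : 0 ≤ α) (hα1 : α < 1) (hn : 3 ≤ n) :
    ∃ x : ℝ, phiPoly α n x = 0 ∧ (n:ℝ) - 2 ≤ x := by
  have hN : (3:ℝ) ≤ (n:ℝ) := by exact_mod_cast hn
  have hneg : ((n:ℝ) - 2) ^ 3 - (α * n + n + α - 3) * ((n:ℝ) - 2) ^ 2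
      + (α * n ^ 2 + α ^ 2 * n - α * n - n - 2 * α + 1) * ((n:ℝ) - 2)
      + (-(α ^ 2) * n ^ 2 + 3 * α ^ 2 * n - α * n + n - 4 * α ^ 2 + 5 * α - 3) < 0 := by
    have hid : ((n:ℝ) - 2) ^ 3 - (α * n + n + α - 3) * ((n:ℝ) - 2) ^ 2
        + (α * n ^ 2 + α ^ 2 * n - α * n - n - 2 * α + 1) * ((n:ℝ) - 2)
        + (-(α ^ 2) * n ^ 2 + 3 * α ^ 2 * n - α * n + n - 4 * α ^ 2 + 5 * α - 3)
        = -(1 - α) * (α * ((n:ℝ) - 2 - α) + (1 - α) ^ 2) := by ring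
    rw [hid]
    have h1 : 0 < 1 - α := by linarith
    have h2 : 0 ≤ α * ((n:ℝ) - 2 - α) := mul_nonneg hα0 (by linarith)
    have h3 : 0 < α * ((n:ℝ) - 2 - α) + (1 - α) ^ 2 := by nlinarith [pow_pos h1 2]
    nlinarith [mul_pos h1 h3]
  obtain ⟨x, hx, hge⟩ := cubic_exists_root_ge (α * n + n + α - 3)
    (α * n ^ 2 + α ^ 2 * n - α * n - n - 2 * α + 1)
    (-(α ^ 2) * n ^ 2 + 3 * α ^ 2 * n - α * n + n - 4 * α ^ 2 + 5 * α - 3) ((n:ℝ) - 2) hneg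
  refine ⟨x, ?_, hge⟩
  unfold phiPoly
  linarith [hx]


/-- For `0 ≤ α < 1` and `n ≥ 3`, `λ_α(K_1 ∨ (K_{n−2} ∪ K_1))` is the largest real root of
`φ(x) = x³ − (αn + n + α − 3)x² + (αn² + α²n − αn − n − 2α + 1)x − α²n² + 3α²n − αn + n
− 4α² + 5α − 3`. -/
theorem lambdaAlpha_specialGraph_root (α : ℝ) (hα0 : 0 ≤ α) (hα1 : α < 1)
    (n : ℕ) (hn : 3 ≤ n) :
    ((lambdaAlpha α (specialGraph n)) ^ 3
        - (α * n + n + α - 3) * (lambdaAlpha α (specialGraph n)) ^ 2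
        + (α * n ^ 2 + α ^ 2 * n - α * n - n - 2 * α + 1) * lambdaAlpha α (specialGraph n)
        - α ^ 2 * n ^ 2 + 3 * α ^ 2 * n - α * n + n - 4 * α ^ 2 + 5 * α - 3 = 0) ∧
    ∀ x : ℝ,
      x ^ 3 - (α * n + n + α - 3) * x ^ 2
        + (α * n ^ 2 + α ^ 2 * n - α * n - n - 2 * α + 1) * x
        - α ^ 2 * n ^ 2 + 3 * α ^ 2 * n - α * n + n - 4 * α ^ 2 + 5 * α - 3 = 0 →
      x ≤ lambdaAlpha α (specialGraph n) := by
  have hLeq : lambdaAlpha α (specialGraph n)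
      = sSup (spectrum ℝ (aAlphaMatrix α (specialGraph n))) := my_lambdaAlpha_eq α (specialGraph n)
  set M := aAlphaMatrix α (specialGraph n) with hM
  haveI : Nonempty (SVert n) := ⟨Sum.inl 0⟩
  have hfin : (spectrum ℝ M).Finite := Matrix.finite_spectrum M
  have hne : (spectrum ℝ M).Nonempty :=
    ⟨_, (special_isHermitian α (specialGraph n)).eigenvalues_mem_spectrum_real (Sum.inl 0)⟩
  have hmem : sSup (spectrum ℝ M) ∈ spectrum ℝ M := hne.csSup_mem hfin
  have hub : ∀ x ∈ spectrum ℝ M, x ≤ sSup (spectrum ℝ M) :=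
    fun x hx => le_csSup hfin.bddAbove hx
  obtain ⟨x0, hx0root, hx0ge⟩ := phi_exists_root_ge hα0 hα1 hn
  have hx0le : x0 ≤ sSup (spectrum ℝ M) := hub x0 (root_mem_spectrum hα1 hn hx0root)
  have hN : (3:ℝ) ≤ (n:ℝ) := by exact_mod_cast hn
  constructor
  · rw [hLeq]
    rcases mem_spectrum_imp hα1 hn hmem with h | h
    · unfold phiPoly at h
      linarith [h]
    · exfalso
      have : α * ((n:ℝ) - 1) - 1 < (n:ℝ) - 2 := by nlinarith
      linarith
  · intro x hx
    rw [hLeq]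
    apply hub
    apply root_mem_spectrum hα1 hn
    unfold phiPoly
    linarith [hx]
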